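/- Let 0 < α < 1, let F be α-SR with monopoly price r > 0 (φ(r) = 0), and write q(v) = 1−F(v). Let γ > 0 satisfy 8γ < α, and set s = √(8γ/α). Suppose r̄ ≥ 0 and numbers q̄_r, q̄_{r̄} ∈ [0,1] (the empirical quantiles of r and r̄) satisfy: q(r) ∈ [q̄_r/(1+γ)², q̄_r·(1+γ)²], q(r̄) ∈ [q̄_{r̄}/(1+γ)², q̄_{r̄}·(1+γ)²], and q̄_{r̄}·r̄ ≥ q̄_r·r (r̄ has at least as large empirical revenue as r). Then q(r̄) ≥ (1 − s)·q(r), i.e. the quantile of the empirical reserve price is at least a (1 − √(8γ/α)) fraction of the quantile of the true monopoly price. -/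

import Mathlib

open MeasureTheory Real Filter

/-- The virtual valuation function `φ(v) = v − (1 − F(v))/f(v)`. -/
noncomputable def virtualValue (F f : ℝ → ℝ) (v : ℝ) : ℝ := v - (1 - F v) / f v

/-- The hazard rate `h(v) = f(v)/(1 − F(v))`. -/
noncomputable def hazardRate (F f : ℝ → ℝ) (v : ℝ) : ℝ := f v / (1 - F v)

/-- `F` is the CDF of a continuous distribution supported on `[0, ∞)`,
with density `f = F'` that is positive wherever `F < 1`. -/
structure IsCDF (F f : ℝ → ℝ) : Prop where
  zero : F 0 = 0
  mono : Monotone F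
  le_one : ∀ v, F v ≤ 1
  tendsto_one : Tendsto F atTop (nhds 1)
  hasDeriv : ∀ v, 0 ≤ v → HasDerivAt F (f v) v
  f_pos : ∀ v, 0 ≤ v → F v < 1 → 0 < f v

/-- `F` is `α`-strongly regular: `φ(y) − φ(x) ≥ α (y − x)` for all `x < y` in the support. -/
def IsAlphaSR (α : ℝ) (F f : ℝ → ℝ) : Prop :=
  ∀ x y, 0 ≤ x → x < y → F y < 1 →
    virtualValue F f y - virtualValue F f x ≥ α * (y - x)

/-- Key pointwise lemma: `φ(v) ≥ (α r / q(r)) (q(r) − q(v))` for `v ≥ r`. -/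
private lemma sr_virtual_lb (α : ℝ) (F f : ℝ → ℝ)
    (hα0 : 0 < α) (hα1 : α < 1)
    (hcdf : IsCDF F f) (hSR : IsAlphaSR α F f)
    (r : ℝ) (hr : 0 < r) (hmon : virtualValue F f r = 0)
    (v : ℝ) (hrv : r ≤ v) (hFv1 : F v < 1) :
    α * r * (F v - F r) ≤ (1 - F r) * virtualValue F f v := by
  have hFr1 : F r < 1 := lt_of_le_of_lt (hcdf.mono hrv) hFv1
  have hqs : 0 < 1 - F r := by linarith
  have hv0 : (0:ℝ) ≤ v := le_trans hr.le hrv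
  have hfv : 0 < f v := hcdf.f_pos v hv0 hFv1
  rcases eq_or_lt_of_le hrv with heq | hlt
  · rw [← heq, hmon]; simp
  · have hSRv := hSR r v hr.le hlt hFv1
    rw [hmon, sub_zero] at hSRv
    have hvpd : v - virtualValue F f v = (1 - F v) / f v := by
      simp [virtualValue]
    have hvp_pos : 0 < v - virtualValue F f v := by
      rw [hvpd]; exact div_pos (by linarith) hfv
    by_cases hcase : α * r ≤ virtualValue F f v
    · have e1 : 0 ≤ α * r * (1 - F v) :=
        mul_nonneg (mul_nonneg hα0.le hr.le) (by linarith)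
      have e2 : 0 ≤ (1 - F r) * (virtualValue F f v - α * r) :=
        mul_nonneg hqs.le (by linarith)
      linarith [e1, e2]
    · push_neg at hcase
      set p := virtualValue F f v with hp
      have hpav : α * (v - r) ≤ p := hSRv
      have hDr : 0 < (1 - α) * r + α * v - p := by nlinarith
      have hDw : ∀ w, r ≤ w → 0 < (1 - α) * w + α * v - p := by
        intro w hw; nlinarith
      -- density upper bound on [r, v]
      have hfb : ∀ w, r ≤ w → w ≤ v →
          f w * ((1 - α) * w + α * v - p) ≤ 1 - F r := by
        intro w hw1 hw2
        have hw0 : (0:ℝ) ≤ w := le_trans hr.le hw1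
        have hFw1 : F w < 1 := lt_of_le_of_lt (hcdf.mono hw2) hFv1
        have hfw : 0 < f w := hcdf.f_pos w hw0 hFw1
        have hqw : 1 - F w ≤ 1 - F r := by
          have := hcdf.mono hw1; linarith
        rcases eq_or_lt_of_le hw2 with he | hl
        · subst he
          have heq2 : (1 - α) * w + α * w - p = w - p := by ring
          rw [heq2]
          have h3 : f w * (w - p) = 1 - F w := by
            have h4 : w - p = (1 - F w) / f w := hvpd
            rw [h4]; field_simp
          linarith
        · have hSRw := hSR w v hw0 hl hFv1
          have hwpd : w - virtualValue F f w = (1 - F w) / f w := by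
            simp [virtualValue]
          have h3 : (1 - α) * w + α * v - p ≤ (1 - F w) / f w := by
            rw [← hwpd]; rw [← hp] at hSRw; linarith
          have h4 := (le_div_iff₀ hfw).mp h3
          linarith
      -- antitone potential
      set c := (1 - F r) / (1 - α) with hc
      have h1α : (0:ℝ) < 1 - α := by linarith
      have hc_pos : 0 < c := by positivity
      have hDA : ∀ w ∈ Set.Icc r v,
          HasDerivAt (fun w => F w - c * Real.log ((1 - α) * w + α * v - p))
            (f w - c * ((1 - α) / ((1 - α) * w + α * v - p))) w := by
        intro w hw
        have hw0 : (0:ℝ) ≤ w := le_trans hr.le hw.1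
        have hD := hDw w hw.1
        have hlin : HasDerivAt (fun w : ℝ => (1 - α) * w + α * v - p) (1 - α) w := by
          simpa using (((hasDerivAt_id w).const_mul (1 - α)).add_const (α * v)).sub_const p
        have hlog := hlin.log (ne_of_gt hD)
        exact (hcdf.hasDeriv w hw0).sub (hlog.const_mul c)
      have hΦmono : AntitoneOn
          (fun w => F w - c * Real.log ((1 - α) * w + α * v - p)) (Set.Icc r v) := by
        apply antitoneOn_of_deriv_nonpos (convex_Icc r v)
        · intro w hw
          exact (hDA w hw).continuousAt.continuousWithinAt
        · intro w hw
          rw [interior_Icc] at hw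
          exact (hDA w (Set.Ioo_subset_Icc_self hw)).differentiableAt.differentiableWithinAt
        · intro w hw
          rw [interior_Icc] at hw
          have hw' : w ∈ Set.Icc r v := Set.Ioo_subset_Icc_self hw
          rw [(hDA w hw').deriv]
          have hD := hDw w hw'.1
          have hceq : c * ((1 - α) / ((1 - α) * w + α * v - p))
              = (1 - F r) / ((1 - α) * w + α * v - p) := by
            rw [hc]; field_simp
          rw [hceq]
          have hfw_le : f w ≤ (1 - F r) / ((1 - α) * w + α * v - p) := by
            rw [le_div_iff₀ hD]
            exact hfb w hw'.1 hw'.2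
          linarith
      have hΦ := hΦmono (Set.left_mem_Icc.mpr hrv) (Set.right_mem_Icc.mpr hrv) hrv
      simp only at hΦ
      have hvv : (1 - α) * v + α * v - p = v - p := by ring
      rw [hvv] at hΦ
      have hlog2 : Real.log (v - p) - Real.log ((1 - α) * r + α * v - p)
          ≤ (1 - α) * (v - r) / ((1 - α) * r + α * v - p) := by
        rw [← Real.log_div (ne_of_gt hvp_pos) (ne_of_gt hDr)]
        have h5 := Real.log_le_sub_one_of_pos (div_pos hvp_pos hDr)
        have heq3 : (v - p) / ((1 - α) * r + α * v - p) - 1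
            = (1 - α) * (v - r) / ((1 - α) * r + α * v - p) := by
          rw [eq_div_iff (ne_of_gt hDr), sub_mul, div_mul_cancel₀ _ (ne_of_gt hDr)]
          ring
        linarith [heq3 ▸ h5]
      have hkey2 : F v - F r ≤ (1 - F r) * (v - r) / ((1 - α) * r + α * v - p) := by
        have h5 : F v - F r
            ≤ c * (Real.log (v - p) - Real.log ((1 - α) * r + α * v - p)) := by
          linarith [hΦ]
        have h6 : c * ((1 - α) * (v - r) / ((1 - α) * r + α * v - p))
            = (1 - F r) * (v - r) / ((1 - α) * r + α * v - p) := by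
          rw [hc]; field_simp
        calc F v - F r
            ≤ c * (Real.log (v - p) - Real.log ((1 - α) * r + α * v - p)) := h5
          _ ≤ c * ((1 - α) * (v - r) / ((1 - α) * r + α * v - p)) :=
              mul_le_mul_of_nonneg_left hlog2 hc_pos.le
          _ = (1 - F r) * (v - r) / ((1 - α) * r + α * v - p) := h6
      have hquad : α * r * (v - r) ≤ p * ((1 - α) * r + α * v - p) := by
        linarith [mul_nonneg (sub_nonneg.mpr hpav) (sub_nonneg.mpr hcase.le),
          mul_nonneg (mul_nonneg hr.le h1α.le) (sub_nonneg.mpr hpav)]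
      have h5 : α * r * (v - r) / ((1 - α) * r + α * v - p) ≤ p :=
        (div_le_iff₀ hDr).mpr hquad
      have h6 : α * r * (F v - F r)
          ≤ α * r * ((1 - F r) * (v - r) / ((1 - α) * r + α * v - p)) :=
        mul_le_mul_of_nonneg_left hkey2 (by positivity)
      have h7 : α * r * ((1 - F r) * (v - r) / ((1 - α) * r + α * v - p))
          = (1 - F r) * (α * r * (v - r) / ((1 - α) * r + α * v - p)) := by
        ring
      have h8 : (1 - F r) * (α * r * (v - r) / ((1 - α) * r + α * v - p))
          ≤ (1 - F r) * p := mul_le_mul_of_nonneg_left h5 hqs.le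
      linarith [h7 ▸ h6]

/-- Revenue-loss lemma: `r q(r) − v q(v) ≥ (α r / 2 q(r)) (q(r) − q(v))²` for `v ≥ r`. -/
private lemma sr_revenue_loss (α : ℝ) (F f : ℝ → ℝ)
    (hα0 : 0 < α) (hα1 : α < 1)
    (hcdf : IsCDF F f) (hSR : IsAlphaSR α F f)
    (r : ℝ) (hr : 0 < r) (hmon : virtualValue F f r = 0)
    (rbar : ℝ) (hrrbar : r ≤ rbar) (hFrbar1 : F rbar < 1) :
    α * r / (2 * (1 - F r)) * (F rbar - F r) ^ 2
      ≤ r * (1 - F r) - rbar * (1 - F rbar) := by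
  have hFr1 : F r < 1 := lt_of_le_of_lt (hcdf.mono hrrbar) hFrbar1
  have hqs : 0 < 1 - F r := by linarith
  have hDA : ∀ v ∈ Set.Icc r rbar,
      HasDerivAt
        (fun v => r * (1 - F r) - v * (1 - F v)
          - α * r / (2 * (1 - F r)) * (F v - F r) ^ 2)
        (0 - (1 * (1 - F v) + v * (0 - f v))
          - α * r / (2 * (1 - F r)) * (2 * (F v - F r) * f v)) v := by
    intro v hv
    have hv0 : (0:ℝ) ≤ v := le_trans hr.le hv.1
    have hA : HasDerivAt (fun y => y * (1 - F y)) (1 * (1 - F v) + v * (0 - f v)) v :=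
      (hasDerivAt_id v).mul ((hasDerivAt_const v 1).sub (hcdf.hasDeriv v hv0))
    have hB : HasDerivAt (fun y => (F y - F r) ^ 2) (2 * (F v - F r) * f v) v := by
      have h := ((hcdf.hasDeriv v hv0).sub_const (F r)).pow 2
      norm_num at h
      exact h
    exact ((hasDerivAt_const v (r * (1 - F r))).sub hA).sub
      (hB.const_mul (α * r / (2 * (1 - F r))))
  have hH : MonotoneOn
      (fun v => r * (1 - F r) - v * (1 - F v)
        - α * r / (2 * (1 - F r)) * (F v - F r) ^ 2) (Set.Icc r rbar) := by
    apply monotoneOn_of_deriv_nonneg (convex_Icc r rbar)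
    · intro v hv
      exact (hDA v hv).continuousAt.continuousWithinAt
    · intro v hv
      rw [interior_Icc] at hv
      exact (hDA v (Set.Ioo_subset_Icc_self hv)).differentiableAt.differentiableWithinAt
    · intro v hv
      rw [interior_Icc] at hv
      have hv' : v ∈ Set.Icc r rbar := Set.Ioo_subset_Icc_self hv
      rw [(hDA v hv').deriv]
      have hFv1 : F v < 1 := lt_of_le_of_lt (hcdf.mono hv'.2) hFrbar1
      have hv0 : (0:ℝ) ≤ v := le_trans hr.le hv'.1
      have hfv : 0 < f v := hcdf.f_pos v hv0 hFv1
      have hkv := sr_virtual_lb α F f hα0 hα1 hcdf hSR r hr hmon v hv'.1 hFv1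
      have e1 : f v * virtualValue F f v = v * f v - (1 - F v) := by
        simp only [virtualValue]
        field_simp
      have e2 : f v * (α * r * (F v - F r)) ≤ f v * ((1 - F r) * virtualValue F f v) :=
        mul_le_mul_of_nonneg_left hkv hfv.le
      have e3 : f v * ((1 - F r) * virtualValue F f v)
          = (1 - F r) * (v * f v - (1 - F v)) := by
        rw [show f v * ((1 - F r) * virtualValue F f v)
            = (1 - F r) * (f v * virtualValue F f v) from by ring, e1]
      rw [e3] at e2
      -- e2 : f v * (α r (F v − F r)) ≤ (1 − F r)(v f v − (1 − F v))
      have h9 : α * r / (2 * (1 - F r)) * (2 * (F v - F r) * f v)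
          = α * r * (F v - F r) * f v / (1 - F r) := by
        field_simp
      have h10 : α * r * (F v - F r) * f v / (1 - F r) ≤ v * f v - (1 - F v) := by
        rw [div_le_iff₀ hqs]
        linarith [e2]
      rw [h9]
      linarith
  have hHineq := hH (Set.left_mem_Icc.mpr hrrbar) (Set.right_mem_Icc.mpr hrrbar) hrrbar
  simp only at hHineq
  have hHr : r * (1 - F r) - r * (1 - F r)
      - α * r / (2 * (1 - F r)) * (F r - F r) ^ 2 = 0 := by ring
  rw [hHr] at hHineq
  linarith

set_option maxHeartbeats 800000 in
theorem empirical_reserve_quantile_bound (α γ : ℝ) (F f : ℝ → ℝ)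
    (hα0 : 0 < α) (hα1 : α < 1)
    (hcdf : IsCDF F f) (hSR : IsAlphaSR α F f)
    (r : ℝ) (hr : 0 < r) (hmon : virtualValue F f r = 0)
    (hγ : 0 < γ) (hγα : 8 * γ < α)
    (rbar : ℝ) (hrbar : 0 ≤ rbar)
    (qbar_r qbar_rbar : ℝ)
    (hqr0 : 0 ≤ qbar_r) (hqr1 : qbar_r ≤ 1)
    (hqrb0 : 0 ≤ qbar_rbar) (hqrb1 : qbar_rbar ≤ 1)
    (hwin_r : qbar_r / (1 + γ) ^ 2 ≤ 1 - F r ∧ 1 - F r ≤ qbar_r * (1 + γ) ^ 2)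
    (hwin_rbar : qbar_rbar / (1 + γ) ^ 2 ≤ 1 - F rbar ∧
      1 - F rbar ≤ qbar_rbar * (1 + γ) ^ 2)
    (hrev : qbar_rbar * rbar ≥ qbar_r * r) :
    1 - F rbar ≥ (1 - Real.sqrt (8 * γ / α)) * (1 - F r) := by
  obtain ⟨hwr1, hwr2⟩ := hwin_r
  obtain ⟨hwb1, hwb2⟩ := hwin_rbar
  have hγ1 : (0:ℝ) < 1 + γ := by linarith
  have hγ2 : (0:ℝ) < (1 + γ) ^ 2 := by positivity
  have hFr1 : F r < 1 := by
    by_contra h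
    push_neg at h
    have h1 : F r = 1 := le_antisymm (hcdf.le_one r) h
    have h2 : virtualValue F f r = r := by simp [virtualValue, h1]
    rw [hmon] at h2
    linarith
  have hqs : 0 < 1 - F r := by linarith
  have hsa : (0:ℝ) ≤ 8 * γ / α := by positivity
  have hs0 : 0 ≤ Real.sqrt (8 * γ / α) := Real.sqrt_nonneg _
  have hs2 : (Real.sqrt (8 * γ / α)) ^ 2 = 8 * γ / α := Real.sq_sqrt hsa
  by_contra hcon
  push_neg at hcon
  -- hcon : 1 - F rbar < (1 - √(8γ/α)) (1 - F r)
  have hqbr_pos : 0 < qbar_r := by nlinarith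
  have hprod : 0 < qbar_rbar * rbar := lt_of_lt_of_le (by positivity) hrev
  have hqrb_pos : 0 < qbar_rbar := by
    rcases lt_or_ge 0 qbar_rbar with h | h
    · exact h
    · have := mul_nonpos_of_nonpos_of_nonneg h hrbar
      linarith
  have hqb : 0 < 1 - F rbar := by
    have h1 : 0 < qbar_rbar / (1 + γ) ^ 2 := by positivity
    linarith
  have hFrbar1 : F rbar < 1 := by linarith
  have hqblt : 1 - F rbar < 1 - F r := by
    nlinarith [mul_nonneg hs0 hqs.le]
  have hrrbar : r < rbar := by
    by_contra h
    push_neg at h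
    have := hcdf.mono h
    linarith
  -- revenue loss bound
  have hloss0 := sr_revenue_loss α F f hα0 hα1 hcdf hSR r hr hmon
    rbar hrrbar.le hFrbar1
  -- quantile gap
  have hgap : Real.sqrt (8 * γ / α) * (1 - F r) < F rbar - F r := by nlinarith
  have hgap0 : 0 ≤ Real.sqrt (8 * γ / α) * (1 - F r) :=
    mul_nonneg hs0 hqs.le
  have hsq : (Real.sqrt (8 * γ / α) * (1 - F r)) ^ 2 < (F rbar - F r) ^ 2 := by
    nlinarith [hgap, hgap0]
  have hcc_pos : 0 < α * r / (2 * (1 - F r)) := by positivity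
  have hval : α * r / (2 * (1 - F r)) * (Real.sqrt (8 * γ / α) * (1 - F r)) ^ 2
      = 4 * γ * r * (1 - F r) := by
    rw [mul_pow, hs2]
    field_simp
    ring
  have hloss : 4 * γ * r * (1 - F r) < r * (1 - F r) - rbar * (1 - F rbar) := by
    have h1 := mul_lt_mul_of_pos_left hsq hcc_pos
    rw [hval] at h1
    linarith
  -- revenue comparison
  have hA1 : qbar_rbar ≤ (1 - F rbar) * (1 + γ) ^ 2 := (div_le_iff₀ hγ2).mp hwb1
  have hA2 : (1 - F r) / (1 + γ) ^ 2 ≤ qbar_r := by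
    rw [div_le_iff₀ hγ2]; exact hwr2
  have t1 : qbar_rbar * rbar ≤ (1 - F rbar) * (1 + γ) ^ 2 * rbar :=
    mul_le_mul_of_nonneg_right hA1 hrbar
  have t2 : (1 - F r) / (1 + γ) ^ 2 * r ≤ qbar_r * r :=
    mul_le_mul_of_nonneg_right hA2 hr.le
  have hrev2 : (1 - F r) * r ≤ (1 + γ) ^ 4 * ((1 - F rbar) * rbar) := by
    have t3 : (1 - F r) / (1 + γ) ^ 2 * r ≤ (1 - F rbar) * (1 + γ) ^ 2 * rbar := by
      linarith
    have t4 := mul_le_mul_of_nonneg_left t3 hγ2.le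
    have t5 : (1 + γ) ^ 2 * ((1 - F r) / (1 + γ) ^ 2 * r) = (1 - F r) * r := by
      field_simp
    rw [t5] at t4
    have t6 : (1 + γ) ^ 2 * ((1 - F rbar) * (1 + γ) ^ 2 * rbar)
        = (1 + γ) ^ 4 * ((1 - F rbar) * rbar) := by ring
    rw [t6] at t4
    exact t4
  -- numeric contradiction
  have hpoly : (1 + γ) ^ 4 * (1 - 4 * γ) ≤ 1 := by
    have hid : (1 + γ) ^ 4 * (1 - 4 * γ)
        = 1 - (10 * γ ^ 2 + 20 * γ ^ 3 + 15 * γ ^ 4 + 4 * γ ^ 5) := by ring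
    have hpos : 0 ≤ 10 * γ ^ 2 + 20 * γ ^ 3 + 15 * γ ^ 4 + 4 * γ ^ 5 := by positivity
    linarith [hid ▸ le_refl ((1 + γ) ^ 4 * (1 - 4 * γ))]
  have hrq : 0 < r * (1 - F r) := by positivity
  have c1 : (1 + γ) ^ 4 * ((1 - F rbar) * rbar)
      < (1 + γ) ^ 4 * ((1 - 4 * γ) * (r * (1 - F r))) := by
    apply mul_lt_mul_of_pos_left _ (by positivity : (0:ℝ) < (1 + γ) ^ 4)
    linarith
  have c2 : (1 + γ) ^ 4 * ((1 - 4 * γ) * (r * (1 - F r))) ≤ r * (1 - F r) := by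
    have h1 := mul_le_mul_of_nonneg_right hpoly hrq.le
    linarith [h1]
  linarith [hrev2, c1, c2]
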